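/- For every A ∈ M_N(ℝ), the matrix B(A) defined by the Markov prescription equals the Markov-algebra projection of the Hadamard product: B(A) = P_m(F∘A) = F∘A − diag((F∘A)e). In particular the Lax vector field [A, B(A)] coincides with the Hamiltonian vector field [A, P_m(∇H(A))] of the quadratic Hamiltonian H(A) = ½ Tr(A (F∘A)), whose gradient with respect to the trace pairing is ∇H(A) = F∘A. -/

import Mathlib

open Matrix BigOperators Finset

/-- The commutator of two real `N × N` matrices. -/
def matComm {N : ℕ} (A B : Matrix (Fin N) (Fin N) ℝ) : Matrix (Fin N) (Fin N) ℝ :=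
  A * B - B * A

/-- The projection `P_m A = A - diag(Ae)` onto the Markov algebra. -/
def Pm {N : ℕ} (A : Matrix (Fin N) (Fin N) ℝ) : Matrix (Fin N) (Fin N) ℝ :=
  A - Matrix.diagonal (fun i => ∑ j, A i j)

/-- The Markov prescription: `B(A)_{ij} = F_{ij} A_{ij}` off the diagonal and
`B(A)_{ii} = -∑_{j ≠ i} B(A)_{ij}`. -/
def BofA {N : ℕ} (F A : Matrix (Fin N) (Fin N) ℝ) : Matrix (Fin N) (Fin N) ℝ :=
  Matrix.of fun i j =>
    if i = j then -∑ k ∈ Finset.univ.filter (fun k => k ≠ i), F i k * A i k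
    else F i j * A i j

/-- The quadratic Hamiltonian `H(A) = ½ Tr(A (F∘A))`. -/
noncomputable def quadH {N : ℕ} (F A : Matrix (Fin N) (Fin N) ℝ) : ℝ :=
  (1 / 2) * (A * Matrix.hadamard F A).trace

lemma BofA_eq_Pm {N : ℕ} (F A : Matrix (Fin N) (Fin N) ℝ) :
    BofA F A = Pm (Matrix.hadamard F A) := by
  ext i j
  by_cases h : i = j
  · subst h
    simp only [BofA, Pm, Matrix.of_apply, if_pos rfl, Matrix.sub_apply,
      Matrix.diagonal_apply_eq, Matrix.hadamard_apply]
    rw [Finset.filter_ne', ← Finset.add_sum_erase _ (fun k => F i k * A i k)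
      (Finset.mem_univ i)]
    simp only [if_true]
    ring
  · simp [BofA, Pm, Matrix.diagonal_apply_ne _ h, h, Matrix.hadamard_apply]

lemma trace_hadamard_comm {N : ℕ} (F A Y : Matrix (Fin N) (Fin N) ℝ)
    (hF : F.IsSymm) :
    (A * Matrix.hadamard F Y).trace = (Matrix.hadamard F A * Y).trace := by
  simp only [Matrix.trace, Matrix.diag, Matrix.mul_apply, Matrix.hadamard_apply]
  refine Finset.sum_congr rfl fun i _ => Finset.sum_congr rfl fun j _ => ?_
  rw [hF.apply i j]
  ring

theorem BofA_eq_Pm_hadamard_and_gradient (N : ℕ)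
    (F : Matrix (Fin N) (Fin N) ℝ) (hF : F.IsSymm) :
    (∀ A : Matrix (Fin N) (Fin N) ℝ, BofA F A = Pm (Matrix.hadamard F A)) ∧
    (∀ A Y : Matrix (Fin N) (Fin N) ℝ,
      HasDerivAt (fun τ : ℝ => quadH F (A + τ • Y))
        ((Matrix.hadamard F A * Y).trace) 0) ∧
    (∀ A : Matrix (Fin N) (Fin N) ℝ,
      matComm A (BofA F A) = matComm A (Pm (Matrix.hadamard F A))) := by
  refine ⟨fun A => BofA_eq_Pm F A, fun A Y => ?_, fun A => by rw [BofA_eq_Pm]⟩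
  set b : ℝ := (Matrix.hadamard F A * Y).trace with hb
  have key : ∀ τ : ℝ, quadH F (A + τ • Y)
      = quadH F A + τ * b + τ ^ 2 * quadH F Y := by
    intro τ
    have hexp : Matrix.hadamard F (A + τ • Y)
        = Matrix.hadamard F A + τ • Matrix.hadamard F Y := by
      ext i j
      simp [Matrix.hadamard_apply]
      ring
    simp only [quadH, hexp, add_mul, mul_add, Matrix.smul_mul, Matrix.mul_smul,
      Matrix.trace_add, Matrix.trace_smul, smul_eq_mul, smul_smul]
    rw [trace_hadamard_comm F A Y hF, Matrix.trace_mul_comm Y (Matrix.hadamard F A)]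
    ring
  have hpoly : HasDerivAt (fun τ : ℝ => quadH F A + τ * b + τ ^ 2 * quadH F Y) b 0 := by
    have h1 : HasDerivAt (fun τ : ℝ => τ * b) ((1:ℝ) * b) 0 :=
      (hasDerivAt_id (0:ℝ)).mul_const b
    have h2 : HasDerivAt (fun τ : ℝ => τ ^ 2 * quadH F Y)
        (((2:ℕ) * (0:ℝ) ^ (2 - 1)) * quadH F Y) 0 :=
      (hasDerivAt_pow 2 (0:ℝ)).mul_const _
    have := ((hasDerivAt_const (0:ℝ) (quadH F A)).add h1).add h2
    exact this.congr_deriv (by simp)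
  exact hpoly.congr_of_eventuallyEq (Filter.Eventually.of_forall fun τ => (key τ))
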